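/- Let D be a finite domain of size k ≥ 2, and let (p₁, q₁) and (p₂, q₂) be parameter pairs in (0,1) with p₁ + (k−1)q₁ = 1, p₂ + (k−1)q₂ = 1, p₁ ≠ q₁, p₂ ≠ q₂. Suppose n independent users each hold v_u ∈ D and each reports x''_u obtained by applying, with independent randomness, two chained randomizers: the first maps v_u to v_u with probability p₁ and to each other fixed value with probability q₁, and the second does the same with (p₂, q₂). Define p_s = p₁p₂ + (k−1)q₁q₂ and q_s = p₁q₂ + q₁p₂ + (k−2)q₁q₂. Then p_s − q_s = (p₁−q₁)(p₂−q₂), q_s = q₁(p₂−q₂) + q₂, and the longitudinal estimator f̂_L(v) = (C(v) − n·q₁·(p₂−q₂) − n·q₂)/(n·(p₁−q₁)·(p₂−q₂)), with C(v) = |{u : x''_u = v}|, is unbiased: E[f̂_L(v)] = f(v) = |{u : v_u = v}|/n for every v ∈ D. -/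

import Mathlib

/-- **Chained (memoization-based) longitudinal estimator: end-to-end parameters and
unbiasedness.** `n` independent users each hold `v_u ∈ D` (`|D| = k ≥ 2`) and report
`x''_u` obtained by chaining two randomizers with parameters `(p₁, q₁)` and `(p₂, q₂)`
(`pᵢ + (k−1)qᵢ = 1`, `pᵢ ≠ qᵢ`) with independent randomness; the end-to-end
probabilities are `p_s = p₁p₂ + (k−1)q₁q₂` of reporting the true value and
`q_s = p₁q₂ + q₁p₂ + (k−2)q₁q₂` of each fixed different value. Then
`p_s − q_s = (p₁−q₁)(p₂−q₂)`, `q_s = q₁(p₂−q₂) + q₂`, and the longitudinal estimator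
`f̂_L(v) = (C(v) − n·q₁·(p₂−q₂) − n·q₂)/(n·(p₁−q₁)·(p₂−q₂))` is unbiased. -/
theorem chained_estimator_unbiased
    (D : Type) [Fintype D] [DecidableEq D] (k : ℕ) (hk : 2 ≤ k)
    (hcard : Fintype.card D = k)
    (n : ℕ) (hn : 1 ≤ n)
    (p₁ q₁ p₂ q₂ : ℝ)
    (hp₁0 : 0 < p₁) (hp₁1 : p₁ < 1) (hq₁0 : 0 < q₁) (hq₁1 : q₁ < 1)
    (hp₂0 : 0 < p₂) (hp₂1 : p₂ < 1) (hq₂0 : 0 < q₂) (hq₂1 : q₂ < 1)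
    (hsum₁ : p₁ + ((k : ℝ) - 1) * q₁ = 1) (hpq₁ : p₁ ≠ q₁)
    (hsum₂ : p₂ + ((k : ℝ) - 1) * q₂ = 1) (hpq₂ : p₂ ≠ q₂)
    (ps qs : ℝ)
    (hps : ps = p₁ * p₂ + ((k : ℝ) - 1) * q₁ * q₂)
    (hqs : qs = p₁ * q₂ + q₁ * p₂ + ((k : ℝ) - 2) * q₁ * q₂)
    (vu : Fin n → D) :
    ps - qs = (p₁ - q₁) * (p₂ - q₂) ∧
    qs = q₁ * (p₂ - q₂) + q₂ ∧
    (∀ v : D,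
      ∑ x : Fin n → D,
          (∏ u : Fin n, if x u = vu u then ps else qs) *
            ((((Finset.univ.filter fun u : Fin n => x u = v).card : ℝ) -
                n * q₁ * (p₂ - q₂) - n * q₂) /
              (n * (p₁ - q₁) * (p₂ - q₂))) =
        ((Finset.univ.filter fun u : Fin n => vu u = v).card : ℝ) / n) := by
  have hΔ : ps - qs = (p₁ - q₁) * (p₂ - q₂) := by rw [hps, hqs]; ring
  have hqs' : qs = q₁ * (p₂ - q₂) + q₂ := by rw [hqs]; linear_combination q₂ * hsum₁
  have hone : ps + ((k : ℝ) - 1) * qs = 1 := by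
    rw [hps, hqs]; linear_combination (p₁ + ((k:ℝ)-1)*q₁) * hsum₂ + hsum₁
  refine ⟨hΔ, hqs', fun v => ?_⟩
  set w : Fin n → D → ℝ := fun u y => if y = vu u then ps else qs with hw
  -- each user's kernel sums to 1
  have hwsum : ∀ u : Fin n, ∑ y : D, w u y = 1 := by
    intro u
    have h1 : ∑ y : D, w u y = ∑ y : D, (qs + if y = vu u then ps - qs else 0) := by
      refine Finset.sum_congr rfl fun y _ => ?_
      by_cases h : y = vu u <;> simp [w, h]
    rw [h1, Finset.sum_add_distrib, Finset.sum_const,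
      Finset.sum_ite_eq' Finset.univ (vu u) (fun _ => ps - qs)]
    simp only [Finset.card_univ, hcard, Finset.mem_univ, if_pos, nsmul_eq_mul]
    linear_combination hone
  -- total mass is 1
  have hWsum : ∑ x : Fin n → D, ∏ u : Fin n, w u (x u) = 1 := by
    rw [← Fintype.prod_sum (fun u y => w u y)]
    simp [hwsum]
  -- expectation of the indicator of coordinate u
  have hcoord : ∀ u : Fin n,
      (∑ x : Fin n → D, (∏ u' : Fin n, w u' (x u')) * (if x u = v then (1:ℝ) else 0))
        = w u v := by
    intro u
    set g : Fin n → D → ℝ :=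
      fun u' y => if u' = u then (if y = v then w u y else 0) else w u' y with hg
    have h1 : ∀ x : Fin n → D,
        (∏ u' : Fin n, w u' (x u')) * (if x u = v then (1:ℝ) else 0)
          = ∏ u' : Fin n, g u' (x u') := by
      intro x
      by_cases h : x u = v
      · rw [if_pos h, mul_one]
        refine Finset.prod_congr rfl fun u' _ => ?_
        by_cases hu : u' = u
        · subst hu; simp [g, h]
        · simp [g, hu]
      · rw [if_neg h, mul_zero]
        exact (Finset.prod_eq_zero (Finset.mem_univ u) (by simp [g, h])).symm
    calc (∑ x : Fin n → D, (∏ u' : Fin n, w u' (x u')) * (if x u = v then (1:ℝ) else 0))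
        = ∑ x : Fin n → D, ∏ u' : Fin n, g u' (x u') :=
          Finset.sum_congr rfl fun x _ => h1 x
      _ = ∏ u' : Fin n, ∑ y : D, g u' y := (Fintype.prod_sum (fun u' y => g u' y)).symm
      _ = ∑ y : D, g u y := by
          refine Finset.prod_eq_single u (fun b _ hb => ?_) (by simp)
          simp [g, hb, hwsum b]
      _ = w u v := by
          simp only [g, if_pos rfl]
          exact Finset.sum_ite_eq' Finset.univ v (fun y => w u y) |>.trans (by simp)
  -- abbreviations
  set a : ℝ := (n : ℝ) * q₁ * (p₂ - q₂) + (n : ℝ) * q₂ with ha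
  set d : ℝ := (n : ℝ) * (p₁ - q₁) * (p₂ - q₂) with hd
  have hn0 : (n : ℝ) ≠ 0 := by positivity
  have hΔ₁ : p₁ - q₁ ≠ 0 := sub_ne_zero.mpr hpq₁
  have hΔ₂ : p₂ - q₂ ≠ 0 := sub_ne_zero.mpr hpq₂
  have hd0 : d ≠ 0 := by
    rw [hd]; exact mul_ne_zero (mul_ne_zero hn0 hΔ₁) hΔ₂
  -- the main expected count
  have hS : (∑ x : Fin n → D, (∏ u : Fin n, w u (x u)) *
      ((Finset.univ.filter fun u : Fin n => x u = v).card : ℝ))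
      = ∑ u : Fin n, w u v := by
    have hcast : ∀ x : Fin n → D,
        ((Finset.univ.filter fun u : Fin n => x u = v).card : ℝ)
          = ∑ u : Fin n, (if x u = v then (1:ℝ) else 0) := by
      intro x
      rw [Finset.card_filter]
      push_cast
      rfl
    calc (∑ x : Fin n → D, (∏ u : Fin n, w u (x u)) *
          ((Finset.univ.filter fun u : Fin n => x u = v).card : ℝ))
        = ∑ x : Fin n → D, ∑ u : Fin n,
            (∏ u' : Fin n, w u' (x u')) * (if x u = v then (1:ℝ) else 0) := by
          refine Finset.sum_congr rfl fun x _ => ?_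
          rw [hcast x, Finset.mul_sum]
      _ = ∑ u : Fin n, ∑ x : Fin n → D,
            (∏ u' : Fin n, w u' (x u')) * (if x u = v then (1:ℝ) else 0) :=
          Finset.sum_comm
      _ = ∑ u : Fin n, w u v := Finset.sum_congr rfl fun u _ => hcoord u
  -- compute ∑ u, w u v
  have hm : ∑ u : Fin n, w u v
      = ((Finset.univ.filter fun u : Fin n => vu u = v).card : ℝ) * ps
        + ((Finset.univ.filter fun u : Fin n => ¬ vu u = v).card : ℝ) * qs := by
    have : ∀ u : Fin n, w u v = if vu u = v then ps else qs := by
      intro u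
      by_cases h : vu u = v
      · simp [w, h]
      · show (if v = vu u then ps else qs) = _
        rw [if_neg (fun hvv => h hvv.symm), if_neg h]
    simp only [this]
    rw [Finset.sum_ite, Finset.sum_const, Finset.sum_const]
    simp [nsmul_eq_mul]
  have hmn : ((Finset.univ.filter fun u : Fin n => vu u = v).card : ℝ)
      + ((Finset.univ.filter fun u : Fin n => ¬ vu u = v).card : ℝ) = (n : ℝ) := by
    rw [← Nat.cast_add]
    rw [Finset.card_filter_add_card_filter_not]
    simp
  -- put everything together
  have hsplit : ∀ x : Fin n → D,
      (∏ u : Fin n, w u (x u)) *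
        ((((Finset.univ.filter fun u : Fin n => x u = v).card : ℝ) - a) / d)
      = ((∏ u : Fin n, w u (x u)) *
          ((Finset.univ.filter fun u : Fin n => x u = v).card : ℝ)) * d⁻¹
        - (∏ u : Fin n, w u (x u)) * (a * d⁻¹) := by
    intro x
    rw [div_eq_mul_inv]
    ring
  have key : (∑ x : Fin n → D,
      (∏ u : Fin n, w u (x u)) *
        ((((Finset.univ.filter fun u : Fin n => x u = v).card : ℝ) - a) / d))
      = (∑ u : Fin n, w u v) * d⁻¹ - a * d⁻¹ := by
    rw [Finset.sum_congr rfl fun x _ => hsplit x, Finset.sum_sub_distrib,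
      ← Finset.sum_mul, ← Finset.sum_mul, hS, hWsum, one_mul]
  have goal_eq : (∑ x : Fin n → D,
      (∏ u : Fin n, w u (x u)) *
        ((((Finset.univ.filter fun u : Fin n => x u = v).card : ℝ) - a) / d))
      = ((Finset.univ.filter fun u : Fin n => vu u = v).card : ℝ) / n := by
    rw [key, hm]
    set m₁ : ℝ := ((Finset.univ.filter fun u : Fin n => vu u = v).card : ℝ)
    set m₂ : ℝ := ((Finset.univ.filter fun u : Fin n => ¬ vu u = v).card : ℝ)
    have hnum : m₁ * ps + m₂ * qs - a = m₁ * ((p₁ - q₁) * (p₂ - q₂)) := by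
      have h2 : m₂ = (n:ℝ) - m₁ := by linarith
      rw [h2, ha]
      linear_combination m₁ * hΔ + (n:ℝ) * hqs'
    calc (m₁ * ps + m₂ * qs) * d⁻¹ - a * d⁻¹
        = (m₁ * ps + m₂ * qs - a) * d⁻¹ := by ring
      _ = m₁ * ((p₁ - q₁) * (p₂ - q₂)) * d⁻¹ := by rw [hnum]
      _ = m₁ / n := by
          rw [hd]
          field_simp
  calc (∑ x : Fin n → D,
        (∏ u : Fin n, if x u = vu u then ps else qs) *
          ((((Finset.univ.filter fun u : Fin n => x u = v).card : ℝ) -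
              n * q₁ * (p₂ - q₂) - n * q₂) /
            (n * (p₁ - q₁) * (p₂ - q₂))))
      = ∑ x : Fin n → D,
        (∏ u : Fin n, w u (x u)) *
          ((((Finset.univ.filter fun u : Fin n => x u = v).card : ℝ) - a) / d) := by
        refine Finset.sum_congr rfl fun x _ => ?_
        rw [ha, hd]; simp only [hw]; ring_nf
    _ = ((Finset.univ.filter fun u : Fin n => vu u = v).card : ℝ) / n := goal_eq
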